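/- arXiv:1008.2248 — 2 statements merged into one kernel-verified Lean document; each statement's English description precedes it below -/
import Mathlib

section
/- Let ν > 0 be small and define ψ_ν(x,z) = (cosh z)^{-θ} + ν(cosh(x/2) + cosh(z/2)) for fixed 0 < θ ≤ 1/√2. Then (Δ − 1)ψ_ν ≤ −(1/4)ψ_ν pointwise on ℝ², i.e., ψ_ν is a positive supersolution of the operator Δ − 1 + 1/4. -/
/-- The Laplacian on ℝ², computed variable by variable. -/
noncomputable def lap (u : ℝ → ℝ → ℝ) (x z : ℝ) : ℝ :=
  deriv (deriv fun x' => u x' z) x + deriv (deriv fun z' => u x z') z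

lemma half_deriv (t : ℝ) : HasDerivAt (fun s : ℝ => s / 2) (1 / 2) t := by
  simpa using (hasDerivAt_id t).div_const 2

lemma rpow_deriv (θ t : ℝ) :
    HasDerivAt (fun s => Real.cosh s ^ (-θ))
      (-θ * Real.cosh t ^ (-θ - 1) * Real.sinh t) t := by
  have h := (Real.hasDerivAt_cosh t).rpow_const (p := -θ) (Or.inl ((Real.cosh_pos t).ne'))
  convert h using 1
  ring

lemma rpow_deriv2 (θ t : ℝ) :
    HasDerivAt (fun s => -θ * Real.cosh s ^ (-θ - 1) * Real.sinh s)
      ((-θ * ((-θ - 1) * Real.cosh t ^ (-θ - 1 - 1) * Real.sinh t)) * Real.sinh t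
        + (-θ * Real.cosh t ^ (-θ - 1)) * Real.cosh t) t := by
  have h := ((((Real.hasDerivAt_cosh t).rpow_const (p := -θ - 1)
    (Or.inl ((Real.cosh_pos t).ne'))).const_mul (-θ))).mul (Real.hasDerivAt_sinh t)
  convert h using 1 <;> first | rfl | ring

/-- ψ_ν is a positive supersolution of Δ - 1 + 1/4. -/
theorem stmt15 (θ ν : ℝ) (hθ0 : 0 < θ) (hθ : θ ≤ 1 / Real.sqrt 2) (hν : 0 < ν)
    (ψ : ℝ → ℝ → ℝ)
    (hψ : ∀ x z, ψ x z =
      Real.cosh z ^ (-θ) + ν * (Real.cosh (x / 2) + Real.cosh (z / 2))) :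
    ∀ x z, 0 < ψ x z ∧ lap ψ x z - ψ x z ≤ -(1 / 4) * ψ x z := by
  intro x z
  have hA : (0:ℝ) < Real.cosh z ^ (-θ) := Real.rpow_pos_of_pos (Real.cosh_pos _) _
  constructor
  · rw [hψ]
    have h1 : (0:ℝ) < Real.cosh (x / 2) := Real.cosh_pos _
    have h2 : (0:ℝ) < Real.cosh (z / 2) := Real.cosh_pos _
    positivity
  -- compute the x-part of the laplacian
  have hx1 : ∀ t : ℝ, HasDerivAt (fun x' => ψ x' z)
      (ν * (Real.sinh (t / 2) * (1 / 2))) t := by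
    intro t
    have h := (((half_deriv t).cosh).const_mul ν).const_add
      (Real.cosh z ^ (-θ) + ν * Real.cosh (z / 2))
    have heq : (fun x' => ψ x' z)
        = fun x' => (Real.cosh z ^ (-θ) + ν * Real.cosh (z / 2))
          + ν * Real.cosh (x' / 2) := by
      funext s; rw [hψ]; ring
    rw [heq]
    exact h
  have hx2 : deriv (fun x' => ψ x' z) = fun t => ν * (Real.sinh (t / 2) * (1 / 2)) := by
    funext t; exact (hx1 t).deriv
  have hxd : deriv (deriv fun x' => ψ x' z) x
      = ν * (Real.cosh (x / 2) * (1 / 2) * (1 / 2)) := by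
    rw [hx2]
    exact ((((half_deriv x).sinh).mul_const (1 / 2)).const_mul ν).deriv
  -- compute the z-part of the laplacian
  have hz1 : ∀ t : ℝ, HasDerivAt (fun z' => ψ x z')
      (-θ * Real.cosh t ^ (-θ - 1) * Real.sinh t
        + ν * (Real.sinh (t / 2) * (1 / 2))) t := by
    intro t
    have h := (rpow_deriv θ t).add
      ((((half_deriv t).cosh).const_add (Real.cosh (x / 2))).const_mul ν)
    have heq : (fun z' => ψ x z')
        = fun z' => Real.cosh z' ^ (-θ)
          + ν * (Real.cosh (x / 2) + Real.cosh (z' / 2)) := by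
      funext s; rw [hψ]
    rw [heq]
    exact h
  have hz2 : deriv (fun z' => ψ x z')
      = fun t => -θ * Real.cosh t ^ (-θ - 1) * Real.sinh t
        + ν * (Real.sinh (t / 2) * (1 / 2)) := by
    funext t; exact (hz1 t).deriv
  have hzd : deriv (deriv fun z' => ψ x z') z
      = ((-θ * ((-θ - 1) * Real.cosh z ^ (-θ - 1 - 1) * Real.sinh z)) * Real.sinh z
        + (-θ * Real.cosh z ^ (-θ - 1)) * Real.cosh z)
        + ν * (Real.cosh (z / 2) * (1 / 2) * (1 / 2)) := by
    rw [hz2]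
    exact ((rpow_deriv2 θ z).add
      ((((half_deriv z).sinh).mul_const (1 / 2)).const_mul ν)).deriv
  -- now the inequality
  have hC : (0:ℝ) < Real.cosh z := Real.cosh_pos z
  have hB : (0:ℝ) < Real.cosh z ^ (-θ - 1 - 1) := Real.rpow_pos_of_pos hC _
  have hr1 : Real.cosh z ^ (-θ - 1) * Real.cosh z = Real.cosh z ^ (-θ) := by
    rw [← Real.rpow_add_one hC.ne' (-θ - 1)]; ring_nf
  have hr2 : Real.cosh z ^ (-θ - 1 - 1) * Real.cosh z = Real.cosh z ^ (-θ - 1) := by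
    rw [← Real.rpow_add_one hC.ne' (-θ - 1 - 1)]; ring_nf
  have hs : Real.sinh z ^ 2 = Real.cosh z ^ 2 - 1 := by
    have := Real.cosh_sq z; linarith
  have hθ2 : θ ^ 2 ≤ 1 / 2 := by
    have hs2 : (0:ℝ) < Real.sqrt 2 := Real.sqrt_pos.mpr (by norm_num)
    have h1 : θ * Real.sqrt 2 ≤ 1 := by
      rw [div_eq_inv_mul, mul_one] at hθ
      calc θ * Real.sqrt 2 ≤ (Real.sqrt 2)⁻¹ * Real.sqrt 2 := by
            exact mul_le_mul_of_nonneg_right hθ hs2.le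
        _ = 1 := inv_mul_cancel₀ hs2.ne'
    have h2 : Real.sqrt 2 ^ 2 = 2 := Real.sq_sqrt (by norm_num)
    nlinarith [sq_nonneg (θ * Real.sqrt 2)]
  have hcx : (1:ℝ) ≤ Real.cosh (x / 2) := Real.one_le_cosh _
  have hcz : (1:ℝ) ≤ Real.cosh (z / 2) := Real.one_le_cosh _
  have hr3 : Real.cosh z ^ (-θ - 1 - 1) * Real.cosh z * Real.cosh z
      = Real.cosh z ^ (-θ) := by rw [hr2, hr1]
  have hBS : Real.cosh z ^ (-θ - 1 - 1) * Real.sinh z ^ 2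
      = Real.cosh z ^ (-θ) - Real.cosh z ^ (-θ - 1 - 1) := by
    linear_combination Real.cosh z ^ (-θ - 1 - 1) * hs + hr3
  have key : θ * (θ + 1) * (Real.cosh z ^ (-θ - 1 - 1) * Real.sinh z ^ 2)
      - θ * Real.cosh z ^ (-θ) ≤ (3 / 4) * Real.cosh z ^ (-θ) := by
    rw [hBS]
    nlinarith [mul_le_mul_of_nonneg_right hθ2 hA.le, mul_pos (mul_pos hθ0 hB) hC,
      mul_pos hθ0 hB, mul_pos (mul_pos hθ0 hθ0) hB]
  have hx4 : 0 < ν * Real.cosh (x / 2) := mul_pos hν (Real.cosh_pos _)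
  have hz4 : 0 < ν * Real.cosh (z / 2) := mul_pos hν (Real.cosh_pos _)
  rw [lap, hxd, hzd, hψ]
  nlinarith [key, hx4, hz4, hr1]
end

section
/- Let σ ∈ (0,1) and R > 0 and let V : ℝ² → ℝ be continuous with 0 ≤ V(x) < (1−σ²)/2 for |x| ≥ R. Suppose φ is bounded, C², satisfies Δφ − φ + Vφ = 0 on {|x| > R}, and |φ| ≤ M e^{-σR} on {|x| = R}, and φ → 0 at infinity. Then |φ(x)| ≤ M e^{-σ|x|} for all |x| ≥ R. -/
open Filter Set Topology

private lemma sqrt_hasDeriv (c t : ℝ) (h : 0 < t ^ 2 + c) :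
    HasDerivAt (fun t => Real.sqrt (t ^ 2 + c)) (t / Real.sqrt (t ^ 2 + c)) t := by
  have h1 : HasDerivAt (fun t : ℝ => t ^ 2 + c) (2 * t) t := by
    simpa using (hasDerivAt_pow 2 t).add_const c
  have h2 := (Real.hasDerivAt_sqrt h.ne').comp t h1
  have hs : Real.sqrt (t ^ 2 + c) ≠ 0 := (Real.sqrt_pos.2 h).ne'
  refine h2.congr_deriv ?_
  field_simp

private lemma b1 (σ c t : ℝ) (h : 0 < t ^ 2 + c) :
    HasDerivAt (fun t => Real.exp (-σ * Real.sqrt (t ^ 2 + c)))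
      (Real.exp (-σ * Real.sqrt (t ^ 2 + c)) * (-σ * t / Real.sqrt (t ^ 2 + c))) t := by
  have hs := (sqrt_hasDeriv c t h).const_mul (-σ)
  have h2 := hs.exp
  convert h2 using 1
  ring

private lemma b2 (σ c t : ℝ) (h : 0 < t ^ 2 + c) :
    HasDerivAt (fun t => Real.exp (-σ * Real.sqrt (t ^ 2 + c)) * (-σ * t / Real.sqrt (t ^ 2 + c)))
      (Real.exp (-σ * Real.sqrt (t ^ 2 + c)) *
        ((σ * t / Real.sqrt (t ^ 2 + c)) ^ 2 + σ * t ^ 2 / Real.sqrt (t ^ 2 + c) ^ 3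
          - σ / Real.sqrt (t ^ 2 + c))) t := by
  have hs0 : (0:ℝ) < Real.sqrt (t ^ 2 + c) := Real.sqrt_pos.2 h
  have hsd := sqrt_hasDeriv c t h
  have hinv := hsd.inv hs0.ne'
  have hlin : HasDerivAt (fun t : ℝ => -σ * t) (-σ) t := by
    simpa using (hasDerivAt_id t).const_mul (-σ)
  have hu : HasDerivAt (fun t => (-σ * t) * (Real.sqrt (t ^ 2 + c))⁻¹)
      ((-σ) * (Real.sqrt (t ^ 2 + c))⁻¹ +
        (-σ * t) * (-(t / Real.sqrt (t ^ 2 + c)) / Real.sqrt (t ^ 2 + c) ^ 2)) t := hlin.mul hinv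
  have hB := b1 σ c t h
  have hfun : (fun t => Real.exp (-σ * Real.sqrt (t ^ 2 + c)) * (-σ * t / Real.sqrt (t ^ 2 + c)))
      = fun t => Real.exp (-σ * Real.sqrt (t ^ 2 + c)) *
          ((-σ * t) * (Real.sqrt (t ^ 2 + c))⁻¹) := by
    funext t; rw [div_eq_mul_inv]
  rw [hfun]
  refine (hB.mul hu).congr_deriv ?_
  field_simp
  ring

private lemma bar_sum (E W σ a b : ℝ) (hW : W ≠ 0) (hab : W ^ 2 = a ^ 2 + b ^ 2) :
    E * ((σ * a / W) ^ 2 + σ * a ^ 2 / W ^ 3 - σ / W) +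
      E * ((σ * b / W) ^ 2 + σ * b ^ 2 / W ^ 3 - σ / W) = E * (σ ^ 2 - σ / W) := by
  field_simp
  linear_combination (-(E * σ * (σ * W + 1))) * hab

private lemma diff_deriv_of_contDiff2 {f : ℝ → ℝ} (hf : ContDiff ℝ 2 f) :
    Differentiable ℝ (deriv f) := by
  have h2 : (2 : WithTop ℕ∞) = 1 + 1 := by norm_num
  rw [h2, contDiff_succ_iff_deriv] at hf
  exact hf.2.2.differentiable (by norm_num)

private lemma second_deriv_test {g : ℝ → ℝ} {a : ℝ} (hmax : IsLocalMax g a)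
    (hg : ∀ᶠ x in 𝓝 a, DifferentiableAt ℝ g x) :
    deriv (deriv g) a ≤ 0 := by
  by_contra hcon
  push_neg at hcon
  have hd0 : deriv g a = 0 := hmax.deriv_eq_zero
  have hdd : DifferentiableAt ℝ (deriv g) a := by
    by_contra hc
    rw [deriv_zero_of_not_differentiableAt hc] at hcon
    exact lt_irrefl _ hcon
  have hslope : Tendsto (slope (deriv g) a) (𝓝[≠] a) (𝓝 (deriv (deriv g) a)) :=
    hasDerivAt_iff_tendsto_slope.1 hdd.hasDerivAt
  have h1 : ∀ᶠ x in 𝓝[≠] a, 0 < slope (deriv g) a x :=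
    hslope.eventually (eventually_gt_nhds hcon)
  have h2 : ∀ᶠ x in 𝓝[>] a, 0 < slope (deriv g) a x :=
    h1.filter_mono (nhdsWithin_mono a fun x (hx : a < x) => (hx.ne' : x ≠ a))
  have h3 : ∀ᶠ x in 𝓝[>] a, 0 < deriv g x := by
    filter_upwards [h2, self_mem_nhdsWithin] with x hx hx'
    have hxa : 0 < x - a := sub_pos.2 hx'
    have hm := mul_pos hx hxa
    rwa [slope_def_field, hd0, sub_zero, div_mul_cancel₀ _ hxa.ne'] at hm
  have h5 : ∀ᶠ x in 𝓝[>] a, g x ≤ g a := hmax.filter_mono nhdsWithin_le_nhds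
  have h6 : ∀ᶠ x in 𝓝[>] a, DifferentiableAt ℝ g x := hg.filter_mono nhdsWithin_le_nhds
  have hall := h3.and (h5.and h6)
  obtain ⟨b, hb, hIoo⟩ := mem_nhdsGT_iff_exists_Ioo_subset.1 hall
  have hab : a < b := hb
  have hac : a < (a + b) / 2 := by linarith
  have hcb : (a + b) / 2 < b := by linarith
  have hcont : ContinuousOn g (Icc a ((a + b) / 2)) := by
    intro y hy
    rcases eq_or_lt_of_le hy.1 with h | h
    · exact h ▸ (hg.self_of_nhds).continuousAt.continuousWithinAt
    · exact ((hIoo ⟨h, lt_of_le_of_lt hy.2 hcb⟩).2.2.continuousAt).continuousWithinAt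
  have hmono : StrictMonoOn g (Icc a ((a + b) / 2)) := by
    apply strictMonoOn_of_deriv_pos (convex_Icc a ((a + b) / 2)) hcont
    intro y hy
    rw [interior_Icc] at hy
    exact (hIoo ⟨hy.1, hy.2.trans hcb⟩).1
  have hlt : g a < g ((a + b) / 2) :=
    hmono (left_mem_Icc.2 hac.le) (right_mem_Icc.2 hac.le) hac
  have hle : g ((a + b) / 2) ≤ g a := (hIoo ⟨hac, hcb⟩).2.1
  linarith

set_option maxHeartbeats 1000000 in
/-- Maximum-principle exponential decay estimate on an exterior domain. -/
theorem stmt17 (σ R M : ℝ) (hσ0 : 0 < σ) (hσ1 : σ < 1) (hR : 0 < R)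
    (V : ℝ → ℝ → ℝ) (hVc : Continuous fun p : ℝ × ℝ => V p.1 p.2)
    (hV : ∀ x z, R ≤ Real.sqrt (x ^ 2 + z ^ 2) →
      0 ≤ V x z ∧ V x z < (1 - σ ^ 2) / 2)
    (φ : ℝ → ℝ → ℝ) (hφ2 : ContDiff ℝ 2 fun p : ℝ × ℝ => φ p.1 p.2)
    (hφb : ∃ M₀, ∀ x z, |φ x z| ≤ M₀)
    (heq : ∀ x z, R < Real.sqrt (x ^ 2 + z ^ 2) →
      lap φ x z - φ x z + V x z * φ x z = 0)
    (hbd : ∀ x z, Real.sqrt (x ^ 2 + z ^ 2) = R → |φ x z| ≤ M * Real.exp (-σ * R))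
    (hdecay : ∀ ε > 0, ∃ ρ, ∀ x z, ρ ≤ Real.sqrt (x ^ 2 + z ^ 2) → |φ x z| ≤ ε) :
    ∀ x z, R ≤ Real.sqrt (x ^ 2 + z ^ 2) →
      |φ x z| ≤ M * Real.exp (-σ * Real.sqrt (x ^ 2 + z ^ 2)) := by
  intro x z hxz
  by_contra hcon
  push_neg at hcon
  -- M ≥ 0
  have hM : 0 ≤ M := by
    have hRR : Real.sqrt (R ^ 2 + 0 ^ 2) = R := by
      simpa using Real.sqrt_sq hR.le
    have hb0 := hbd R 0 hRR
    have hexp : 0 < Real.exp (-σ * R) := Real.exp_pos _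
    nlinarith [abs_nonneg (φ R 0)]
  obtain ⟨s0, hs0def⟩ : ∃ s0 : ℝ,
      s0 = |φ x z| - M * Real.exp (-σ * Real.sqrt (x ^ 2 + z ^ 2)) := ⟨_, rfl⟩
  have hs0 : 0 < s0 := by rw [hs0def]; linarith only [hcon]
  obtain ⟨ρ₀, hρ₀⟩ := hdecay (s0 / 2) (by linarith)
  obtain ⟨ρ, hρdef⟩ : ∃ ρ : ℝ, ρ = max ρ₀ (Real.sqrt (x ^ 2 + z ^ 2) + 1) := ⟨_, rfl⟩
  have hρ1 : Real.sqrt (x ^ 2 + z ^ 2) + 1 ≤ ρ := hρdef ▸ le_max_right _ _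
  have hRρ : R < ρ := by linarith only [hρ1, hxz]
  have hρpos : 0 < ρ := lt_trans hR hRρ
  have hρdecay : ∀ x' z', ρ ≤ Real.sqrt (x' ^ 2 + z' ^ 2) → |φ x' z'| ≤ s0 / 2 :=
    fun x' z' hh => hρ₀ x' z' (le_trans (hρdef ▸ le_max_left _ _) hh)
  -- continuity
  have hrc : Continuous fun p : ℝ × ℝ => Real.sqrt (p.1 ^ 2 + p.2 ^ 2) :=
    Real.continuous_sqrt.comp (by fun_prop)
  have hφc : Continuous fun p : ℝ × ℝ => φ p.1 p.2 := hφ2.continuous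
  have hhc : Continuous fun p : ℝ × ℝ =>
      |φ p.1 p.2| - M * Real.exp (-σ * Real.sqrt (p.1 ^ 2 + p.2 ^ 2)) :=
    (continuous_abs.comp hφc).sub
      (continuous_const.mul (Real.continuous_exp.comp (continuous_const.mul hrc)))
  -- the compact annulus
  have hKclosed : IsClosed ((fun p : ℝ × ℝ => Real.sqrt (p.1 ^ 2 + p.2 ^ 2)) ⁻¹' Icc R ρ) :=
    isClosed_Icc.preimage hrc
  have hKsub : ((fun p : ℝ × ℝ => Real.sqrt (p.1 ^ 2 + p.2 ^ 2)) ⁻¹' Icc R ρ) ⊆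
      Icc ((-ρ, -ρ) : ℝ × ℝ) (ρ, ρ) := by
    intro p hp
    obtain ⟨h1, h2⟩ : R ≤ Real.sqrt (p.1 ^ 2 + p.2 ^ 2) ∧ Real.sqrt (p.1 ^ 2 + p.2 ^ 2) ≤ ρ := hp
    have hs2 : Real.sqrt (p.1 ^ 2 + p.2 ^ 2) ^ 2 = p.1 ^ 2 + p.2 ^ 2 :=
      Real.sq_sqrt (by positivity)
    have hsq : p.1 ^ 2 + p.2 ^ 2 ≤ ρ ^ 2 := by
      nlinarith only [Real.sqrt_nonneg (p.1 ^ 2 + p.2 ^ 2), hs2, h2]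
    have h1sq : p.1 ^ 2 ≤ ρ ^ 2 := by linarith only [hsq, sq_nonneg p.2]
    have h2sq : p.2 ^ 2 ≤ ρ ^ 2 := by linarith only [hsq, sq_nonneg p.1]
    have ha1 : |p.1| ≤ ρ := by
      have := Real.sqrt_le_sqrt h1sq
      rwa [Real.sqrt_sq_eq_abs, Real.sqrt_sq hρpos.le] at this
    have ha2 : |p.2| ≤ ρ := by
      have := Real.sqrt_le_sqrt h2sq
      rwa [Real.sqrt_sq_eq_abs, Real.sqrt_sq hρpos.le] at this
    exact ⟨⟨neg_le_of_abs_le ha1, neg_le_of_abs_le ha2⟩,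
      ⟨le_of_abs_le ha1, le_of_abs_le ha2⟩⟩
  have hK : IsCompact ((fun p : ℝ × ℝ => Real.sqrt (p.1 ^ 2 + p.2 ^ 2)) ⁻¹' Icc R ρ) :=
    IsCompact.of_isClosed_subset isCompact_Icc hKclosed hKsub
  have hxzK : (x, z) ∈ ((fun p : ℝ × ℝ => Real.sqrt (p.1 ^ 2 + p.2 ^ 2)) ⁻¹' Icc R ρ) := by
    refine ⟨hxz, ?_⟩
    show Real.sqrt (x ^ 2 + z ^ 2) ≤ ρ
    linarith only [hρ1]
  obtain ⟨q, hqK, hqmax⟩ := hK.exists_isMaxOn ⟨(x, z), hxzK⟩ hhc.continuousOn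
  obtain ⟨x₀, z₀⟩ := q
  have hmax' : ∀ p ∈ ((fun p : ℝ × ℝ => Real.sqrt (p.1 ^ 2 + p.2 ^ 2)) ⁻¹' Icc R ρ),
      |φ p.1 p.2| - M * Real.exp (-σ * Real.sqrt (p.1 ^ 2 + p.2 ^ 2)) ≤
        |φ x₀ z₀| - M * Real.exp (-σ * Real.sqrt (x₀ ^ 2 + z₀ ^ 2)) :=
    isMaxOn_iff.mp hqmax
  have hhq : s0 ≤ |φ x₀ z₀| - M * Real.exp (-σ * Real.sqrt (x₀ ^ 2 + z₀ ^ 2)) := by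
    have := hmax' (x, z) hxzK
    rw [hs0def]
    exact le_trans (le_of_eq rfl) this
  have hqR' : R ≤ Real.sqrt (x₀ ^ 2 + z₀ ^ 2) := hqK.1
  have hqρ' : Real.sqrt (x₀ ^ 2 + z₀ ^ 2) ≤ ρ := hqK.2
  -- not on the outer boundary
  have hqρ : Real.sqrt (x₀ ^ 2 + z₀ ^ 2) < ρ := by
    rcases lt_or_eq_of_le hqρ' with hlt | heqρ
    · exact hlt
    · exfalso
      have hφq : |φ x₀ z₀| ≤ s0 / 2 := hρdecay x₀ z₀ heqρ.ge
      have hME : 0 ≤ M * Real.exp (-σ * Real.sqrt (x₀ ^ 2 + z₀ ^ 2)) :=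
        mul_nonneg hM (Real.exp_pos _).le
      linarith only [hhq, hφq, hME, hs0]
  -- not on the inner boundary
  have hqR : R < Real.sqrt (x₀ ^ 2 + z₀ ^ 2) := by
    rcases lt_or_eq_of_le hqR' with hlt | heqR
    · exact hlt
    · exfalso
      have hφq : |φ x₀ z₀| ≤ M * Real.exp (-σ * R) := hbd x₀ z₀ heqR.symm
      rw [heqR] at hφq
      linarith only [hhq, hφq, hs0]
  -- local maximality
  have hUopen : IsOpen ((fun p : ℝ × ℝ => Real.sqrt (p.1 ^ 2 + p.2 ^ 2)) ⁻¹' Ioo R ρ) :=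
    isOpen_Ioo.preimage hrc
  have hqU : (x₀, z₀) ∈ ((fun p : ℝ × ℝ => Real.sqrt (p.1 ^ 2 + p.2 ^ 2)) ⁻¹' Ioo R ρ) :=
    ⟨hqR, hqρ⟩
  have hlocal : IsLocalMax (fun p : ℝ × ℝ =>
      |φ p.1 p.2| - M * Real.exp (-σ * Real.sqrt (p.1 ^ 2 + p.2 ^ 2))) (x₀, z₀) := by
    filter_upwards [hUopen.mem_nhds hqU] with p hp
    exact hmax' p (Ioo_subset_Icc_self hp)
  -- choosing the sign
  obtain ⟨ε₁, hε₁, hψ⟩ : ∃ e : ℝ, (e = 1 ∨ e = -1) ∧ e * φ x₀ z₀ = |φ x₀ z₀| := by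
    rcases abs_choice (φ x₀ z₀) with hc | hc
    · exact ⟨1, Or.inl rfl, by rw [one_mul, hc]⟩
    · exact ⟨-1, Or.inr rfl, by rw [hc]; ring⟩
  have hεle : ∀ t : ℝ, ε₁ * t ≤ |t| := by
    intro t
    rcases hε₁ with he | he <;> rw [he]
    · rw [one_mul]; exact le_abs_self t
    · rw [neg_one_mul]; exact neg_le_abs t
  -- geometry at the max point
  have hspos : 0 < Real.sqrt (x₀ ^ 2 + z₀ ^ 2) := lt_trans hR hqR
  have h0 : 0 < x₀ ^ 2 + z₀ ^ 2 := Real.sqrt_pos.1 hspos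
  have h0z : 0 < z₀ ^ 2 + x₀ ^ 2 := by linarith
  have hsz : Real.sqrt (z₀ ^ 2 + x₀ ^ 2) = Real.sqrt (x₀ ^ 2 + z₀ ^ 2) := by rw [add_comm]
  -- local max of the comparison function
  have hgmax : IsLocalMax (fun p : ℝ × ℝ =>
      ε₁ * φ p.1 p.2 - M * Real.exp (-σ * Real.sqrt (p.1 ^ 2 + p.2 ^ 2))) (x₀, z₀) := by
    filter_upwards [hlocal] with p hp
    have hp' : |φ p.1 p.2| - M * Real.exp (-σ * Real.sqrt (p.1 ^ 2 + p.2 ^ 2)) ≤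
        |φ x₀ z₀| - M * Real.exp (-σ * Real.sqrt (x₀ ^ 2 + z₀ ^ 2)) := hp
    have h1 := hεle (φ p.1 p.2)
    show ε₁ * φ p.1 p.2 - M * Real.exp (-σ * Real.sqrt (p.1 ^ 2 + p.2 ^ 2)) ≤
        ε₁ * φ x₀ z₀ - M * Real.exp (-σ * Real.sqrt (x₀ ^ 2 + z₀ ^ 2))
    rw [hψ]
    linarith only [hp', h1]
  -- restrict to coordinate lines
  have hgxmax : IsLocalMax
      (fun t => ε₁ * φ t z₀ - M * Real.exp (-σ * Real.sqrt (t ^ 2 + z₀ ^ 2))) x₀ := by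
    have htend : Tendsto (fun t : ℝ => (t, z₀)) (𝓝 x₀) (𝓝 (x₀, z₀)) :=
      (continuous_id.prodMk continuous_const).continuousAt
    filter_upwards [htend.eventually hgmax] with t ht
    exact ht
  have hgzmax : IsLocalMax
      (fun t => ε₁ * φ x₀ t - M * Real.exp (-σ * Real.sqrt (t ^ 2 + x₀ ^ 2))) z₀ := by
    have htend : Tendsto (fun t : ℝ => (x₀, t)) (𝓝 z₀) (𝓝 (x₀, z₀)) :=
      (continuous_const.prodMk continuous_id).continuousAt
    filter_upwards [htend.eventually hgmax] with t ht
    show ε₁ * φ x₀ t - M * Real.exp (-σ * Real.sqrt (t ^ 2 + x₀ ^ 2)) ≤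
        ε₁ * φ x₀ z₀ - M * Real.exp (-σ * Real.sqrt (z₀ ^ 2 + x₀ ^ 2))
    rw [show Real.sqrt (t ^ 2 + x₀ ^ 2) = Real.sqrt (x₀ ^ 2 + t ^ 2) by rw [add_comm], hsz]
    exact ht
  -- smoothness of sections
  have hux : ContDiff ℝ 2 (fun t => φ t z₀) := hφ2.comp (contDiff_id.prodMk contDiff_const)
  have huz : ContDiff ℝ 2 (fun t => φ x₀ t) := hφ2.comp (contDiff_const.prodMk contDiff_id)
  have hdux : Differentiable ℝ (fun t => φ t z₀) := hux.differentiable (by norm_num)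
  have hduz : Differentiable ℝ (fun t => φ x₀ t) := huz.differentiable (by norm_num)
  have hddx : Differentiable ℝ (deriv fun t => φ t z₀) := diff_deriv_of_contDiff2 hux
  have hddz : Differentiable ℝ (deriv fun t => φ x₀ t) := diff_deriv_of_contDiff2 huz
  -- eventual positivity of the radicand along lines
  have hopenx : ∀ᶠ t in 𝓝 x₀, 0 < t ^ 2 + z₀ ^ 2 := by
    have hcx : ContinuousAt (fun t : ℝ => t ^ 2 + z₀ ^ 2) x₀ := by fun_prop
    exact hcx.eventually (eventually_gt_nhds h0)
  have hopenz : ∀ᶠ t in 𝓝 z₀, 0 < t ^ 2 + x₀ ^ 2 := by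
    have hcz : ContinuousAt (fun t : ℝ => t ^ 2 + x₀ ^ 2) z₀ := by fun_prop
    exact hcz.eventually (eventually_gt_nhds h0z)
  -- second derivative of the x-section
  have heqx : deriv (fun t => ε₁ * φ t z₀ - M * Real.exp (-σ * Real.sqrt (t ^ 2 + z₀ ^ 2)))
      =ᶠ[𝓝 x₀] fun t => ε₁ * deriv (fun t' => φ t' z₀) t -
        M * (Real.exp (-σ * Real.sqrt (t ^ 2 + z₀ ^ 2)) *
          (-σ * t / Real.sqrt (t ^ 2 + z₀ ^ 2))) := by
    filter_upwards [hopenx] with t ht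
    exact (((hdux t).hasDerivAt.const_mul ε₁).sub ((b1 σ (z₀ ^ 2) t ht).const_mul M)).deriv
  have hd2x : deriv (deriv
      (fun t => ε₁ * φ t z₀ - M * Real.exp (-σ * Real.sqrt (t ^ 2 + z₀ ^ 2)))) x₀ =
      ε₁ * deriv (deriv fun t => φ t z₀) x₀ -
        M * (Real.exp (-σ * Real.sqrt (x₀ ^ 2 + z₀ ^ 2)) *
          ((σ * x₀ / Real.sqrt (x₀ ^ 2 + z₀ ^ 2)) ^ 2 +
            σ * x₀ ^ 2 / Real.sqrt (x₀ ^ 2 + z₀ ^ 2) ^ 3 -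
            σ / Real.sqrt (x₀ ^ 2 + z₀ ^ 2))) := by
    rw [heqx.deriv_eq]
    exact (((hddx x₀).hasDerivAt.const_mul ε₁).sub ((b2 σ (z₀ ^ 2) x₀ h0).const_mul M)).deriv
  have hdiffevx : ∀ᶠ t in 𝓝 x₀, DifferentiableAt ℝ
      (fun t => ε₁ * φ t z₀ - M * Real.exp (-σ * Real.sqrt (t ^ 2 + z₀ ^ 2))) t := by
    filter_upwards [hopenx] with t ht
    exact (((hdux t).hasDerivAt.const_mul ε₁).sub
      ((b1 σ (z₀ ^ 2) t ht).const_mul M)).differentiableAt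
  have hxle := second_deriv_test hgxmax hdiffevx
  rw [hd2x] at hxle
  -- second derivative of the z-section
  have heqz : deriv (fun t => ε₁ * φ x₀ t - M * Real.exp (-σ * Real.sqrt (t ^ 2 + x₀ ^ 2)))
      =ᶠ[𝓝 z₀] fun t => ε₁ * deriv (fun t' => φ x₀ t') t -
        M * (Real.exp (-σ * Real.sqrt (t ^ 2 + x₀ ^ 2)) *
          (-σ * t / Real.sqrt (t ^ 2 + x₀ ^ 2))) := by
    filter_upwards [hopenz] with t ht
    exact (((hduz t).hasDerivAt.const_mul ε₁).sub ((b1 σ (x₀ ^ 2) t ht).const_mul M)).deriv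
  have hd2z : deriv (deriv
      (fun t => ε₁ * φ x₀ t - M * Real.exp (-σ * Real.sqrt (t ^ 2 + x₀ ^ 2)))) z₀ =
      ε₁ * deriv (deriv fun t => φ x₀ t) z₀ -
        M * (Real.exp (-σ * Real.sqrt (z₀ ^ 2 + x₀ ^ 2)) *
          ((σ * z₀ / Real.sqrt (z₀ ^ 2 + x₀ ^ 2)) ^ 2 +
            σ * z₀ ^ 2 / Real.sqrt (z₀ ^ 2 + x₀ ^ 2) ^ 3 -
            σ / Real.sqrt (z₀ ^ 2 + x₀ ^ 2))) := by
    rw [heqz.deriv_eq]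
    exact (((hddz z₀).hasDerivAt.const_mul ε₁).sub ((b2 σ (x₀ ^ 2) z₀ h0z).const_mul M)).deriv
  rw [hsz] at hd2z
  have hdiffevz : ∀ᶠ t in 𝓝 z₀, DifferentiableAt ℝ
      (fun t => ε₁ * φ x₀ t - M * Real.exp (-σ * Real.sqrt (t ^ 2 + x₀ ^ 2))) t := by
    filter_upwards [hopenz] with t ht
    exact (((hduz t).hasDerivAt.const_mul ε₁).sub
      ((b1 σ (x₀ ^ 2) t ht).const_mul M)).differentiableAt
  have hzle := second_deriv_test hgzmax hdiffevz
  rw [hd2z] at hzle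
  -- the PDE at the max point
  have hlapq : deriv (deriv fun t => φ t z₀) x₀ + deriv (deriv fun t => φ x₀ t) z₀ =
      (1 - V x₀ z₀) * φ x₀ z₀ := by
    have h' := heq x₀ z₀ hqR
    simp only [lap] at h'
    linear_combination h'
  -- the barrier Laplacian
  have hsne : Real.sqrt (x₀ ^ 2 + z₀ ^ 2) ≠ 0 := hspos.ne'
  have hs2 : Real.sqrt (x₀ ^ 2 + z₀ ^ 2) ^ 2 = x₀ ^ 2 + z₀ ^ 2 := Real.sq_sqrt h0.le
  have hbar := bar_sum (Real.exp (-σ * Real.sqrt (x₀ ^ 2 + z₀ ^ 2)))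
    (Real.sqrt (x₀ ^ 2 + z₀ ^ 2)) σ x₀ z₀ hsne hs2
  -- assemble the contradiction
  have hkey : ε₁ * ((1 - V x₀ z₀) * φ x₀ z₀) -
      M * (Real.exp (-σ * Real.sqrt (x₀ ^ 2 + z₀ ^ 2)) *
        (σ ^ 2 - σ / Real.sqrt (x₀ ^ 2 + z₀ ^ 2))) =
      (ε₁ * deriv (deriv fun t => φ t z₀) x₀ -
        M * (Real.exp (-σ * Real.sqrt (x₀ ^ 2 + z₀ ^ 2)) *
          ((σ * x₀ / Real.sqrt (x₀ ^ 2 + z₀ ^ 2)) ^ 2 +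
            σ * x₀ ^ 2 / Real.sqrt (x₀ ^ 2 + z₀ ^ 2) ^ 3 -
            σ / Real.sqrt (x₀ ^ 2 + z₀ ^ 2)))) +
      (ε₁ * deriv (deriv fun t => φ x₀ t) z₀ -
        M * (Real.exp (-σ * Real.sqrt (x₀ ^ 2 + z₀ ^ 2)) *
          ((σ * z₀ / Real.sqrt (x₀ ^ 2 + z₀ ^ 2)) ^ 2 +
            σ * z₀ ^ 2 / Real.sqrt (x₀ ^ 2 + z₀ ^ 2) ^ 3 -
            σ / Real.sqrt (x₀ ^ 2 + z₀ ^ 2)))) := by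
    rw [← hlapq, ← hbar]
    ring
  have hsum : ε₁ * ((1 - V x₀ z₀) * φ x₀ z₀) -
      M * (Real.exp (-σ * Real.sqrt (x₀ ^ 2 + z₀ ^ 2)) *
        (σ ^ 2 - σ / Real.sqrt (x₀ ^ 2 + z₀ ^ 2))) ≤ 0 := by
    rw [hkey]
    exact add_nonpos hxle hzle
  -- final arithmetic
  have hVq := hV x₀ z₀ hqR.le
  have hgap : s0 ≤ ε₁ * φ x₀ z₀ -
      M * Real.exp (-σ * Real.sqrt (x₀ ^ 2 + z₀ ^ 2)) := by rw [hψ]; exact hhq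
  have hEpos : 0 < Real.exp (-σ * Real.sqrt (x₀ ^ 2 + z₀ ^ 2)) := Real.exp_pos _
  have hME : 0 ≤ M * Real.exp (-σ * Real.sqrt (x₀ ^ 2 + z₀ ^ 2)) := mul_nonneg hM hEpos.le
  have hrw : ε₁ * ((1 - V x₀ z₀) * φ x₀ z₀) = (1 - V x₀ z₀) * (ε₁ * φ x₀ z₀) := by ring
  rw [hrw] at hsum
  have hV0 : 0 ≤ V x₀ z₀ := hVq.1
  have hV1 : V x₀ z₀ < (1 - σ ^ 2) / 2 := hVq.2
  have hψpos : M * Real.exp (-σ * Real.sqrt (x₀ ^ 2 + z₀ ^ 2)) < ε₁ * φ x₀ z₀ := by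
    linarith only [hgap, hs0]
  have h1Vpos : 0 < 1 - V x₀ z₀ := by linarith only [hV1, sq_nonneg σ]
  have hk1 : (1 - V x₀ z₀) * (M * Real.exp (-σ * Real.sqrt (x₀ ^ 2 + z₀ ^ 2))) <
      (1 - V x₀ z₀) * (ε₁ * φ x₀ z₀) := mul_lt_mul_of_pos_left hψpos h1Vpos
  have hk2 : (1 + σ ^ 2) / 2 * (M * Real.exp (-σ * Real.sqrt (x₀ ^ 2 + z₀ ^ 2))) ≤
      (1 - V x₀ z₀) * (M * Real.exp (-σ * Real.sqrt (x₀ ^ 2 + z₀ ^ 2))) :=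
    mul_le_mul_of_nonneg_right (by linarith only [hV1]) hME
  have hterm : 0 ≤ M * (Real.exp (-σ * Real.sqrt (x₀ ^ 2 + z₀ ^ 2)) *
      (σ / Real.sqrt (x₀ ^ 2 + z₀ ^ 2))) := by positivity
  have hσsq : 0 ≤ M * Real.exp (-σ * Real.sqrt (x₀ ^ 2 + z₀ ^ 2)) * (1 - σ ^ 2) :=
    mul_nonneg hME
      (by linarith only [mul_lt_mul_of_pos_left hσ1 hσ0, hσ1, mul_one σ])
  linarith only [hsum, hk1, hk2, hterm, hσsq]
end
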